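/- Let d ≥ 1, H ∈ (0,1), A ∈ ℝ^{d×d}, and let (B_t)_{t∈[0,1]} be a d-dimensional fractional Brownian motion with Hurst parameter H with continuous sample paths. Let X̃_t := ∫₀^t exp((t−s)A) A B_s ds + B_t for t ∈ [0,1] (pathwise Bochner integral) and let a_{ij}(t) denote the (i,j) entry of exp(tA)A. Assume there exist i₀ ∈ {1,…,d} and C₁ ∈ (0,1) such that min_{t∈[0,1]} a_{i₀i₀}(t) ≥ −1 + C₁. Then for every u ∈ [0,1], the i₀-th coordinate satisfies E[ (X̃_u^{i₀})² ] ≥ C₁ · u^{2H}. -/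

import Mathlib

open MeasureTheory ProbabilityTheory Real Set
open scoped ProbabilityTheory

/-- The matrix `exp(tA) A`, whose entries are the `a_{ij}(t)` of the paper. -/
noncomputable def aEnt {d : ℕ} (A : Matrix (Fin d) (Fin d) ℝ) (t : ℝ) :
    Matrix (Fin d) (Fin d) ℝ :=
  NormedSpace.exp (t • A) * A

/-- The centered solution `X̃_t = ∫₀ᵗ exp((t-s)A) A B_s ds + B_t` (written
coordinatewise) of the fractional Ornstein–Uhlenbeck equation `dX_t = A X_t dt + dB_t^H`. -/
noncomputable def fouCentered {Ω : Type*} {d : ℕ} (A : Matrix (Fin d) (Fin d) ℝ)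
    (B : ℝ → Ω → Fin d → ℝ) (t : ℝ) (ω : Ω) (i : Fin d) : ℝ :=
  (∫ s in (0:ℝ)..t, ∑ j, aEnt A (t - s) i j * B s ω j) + B t ω i

/-- The constant `C₂ = max_{i,j} sup_{t ∈ [0,1]} |a_{ij}(t)|² +
max_{i,j} sup_{t ∈ [0,1]} |a_{ij}(t)| + 1`. -/
noncomputable def entC2 {d : ℕ} (A : Matrix (Fin d) (Fin d) ℝ) : ℝ :=
  (⨆ p : Fin d × Fin d × Icc (0:ℝ) 1, |aEnt A (p.2.2 : ℝ) p.1 p.2.1| ^ 2) +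
    (⨆ p : Fin d × Fin d × Icc (0:ℝ) 1, |aEnt A (p.2.2 : ℝ) p.1 p.2.1|) + 1

/-- A `d`-dimensional fractional Brownian motion with Hurst parameter `H` on `[0,1]`,
with continuous sample paths: every finite linear combination of coordinate values is a
centered Gaussian random variable, distinct coordinates are independent (their
cross-covariances vanish) and each coordinate has the fBM covariance
`E[B_t^i B_s^i] = (1/2)(t^(2H) + s^(2H) - |t-s|^(2H))`. -/
def IsMultiFBM {Ω : Type*} [MeasureSpace Ω] {d : ℕ} (H : ℝ)
    (B : ℝ → Ω → Fin d → ℝ) : Prop :=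
  (∀ t ∈ Icc (0:ℝ) 1, ∀ i, Measurable fun ω => B t ω i) ∧
  (∀ ω i, ContinuousOn (fun t => B t ω i) (Icc (0:ℝ) 1)) ∧
  (∀ (n : ℕ) (ts : Fin n → ℝ) (idx : Fin n → Fin d) (cs : Fin n → ℝ),
    (∀ k, ts k ∈ Icc (0:ℝ) 1) →
    ∃ v : NNReal,
      Measure.map (fun ω => ∑ k, cs k * B (ts k) ω (idx k)) (ℙ : Measure Ω) =
        gaussianReal 0 v) ∧
  (∀ (i j : Fin d) (s t : ℝ), s ∈ Icc (0:ℝ) 1 → t ∈ Icc (0:ℝ) 1 →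
    (∫ ω, B s ω i * B t ω j ∂(ℙ : Measure Ω)) =
      if i = j then (s ^ (2 * H) + t ^ (2 * H) - |t - s| ^ (2 * H)) / 2 else 0)

open scoped ENNReal

lemma aux_sq_integral_le {α : Type*} [MeasurableSpace α] (μ : Measure α) [IsFiniteMeasure μ]
    {f : α → ℝ} (hf : MemLp f 2 μ) :
    (∫ x, f x ∂μ) ^ 2 ≤ (μ Set.univ).toReal * ∫ x, f x ^ 2 ∂μ := by
  by_cases hμ : μ = 0
  · simp [hμ]
  have h1 : Integrable f μ := hf.integrable one_le_two
  have h2 : Integrable (fun x => f x ^ 2) μ := hf.integrable_sq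
  set m := (μ Set.univ).toReal with hm
  have hm0 : 0 < m :=
    ENNReal.toReal_pos (Measure.measure_univ_pos.2 hμ).ne' (measure_ne_top μ _)
  set c := ∫ x, f x ∂μ with hc
  have key : 0 ≤ ∫ x, (m * f x - c) ^ 2 ∂μ := integral_nonneg fun x => sq_nonneg _
  have expand : ∫ x, (m * f x - c) ^ 2 ∂μ
      = m ^ 2 * (∫ x, f x ^ 2 ∂μ) - (2 * m * c) * c + m * c ^ 2 := by
    have hpt : ∀ x, (m * f x - c) ^ 2 = m ^ 2 * f x ^ 2 - (2 * m * c) * f x + c ^ 2 := by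
      intro x; ring
    simp_rw [hpt]
    have hint1 : Integrable (fun x => m ^ 2 * f x ^ 2 - 2 * m * c * f x) μ :=
      (h2.const_mul _).sub (h1.const_mul _)
    rw [integral_add hint1 (integrable_const _),
      integral_sub (h2.const_mul _) (h1.const_mul _), integral_const_mul, integral_const_mul,
      integral_const, smul_eq_mul, measureReal_def]
  nlinarith [key, expand, sq_nonneg c, sq_nonneg m]

lemma aux_integrable_mul {Ω : Type*} [MeasurableSpace Ω] {P : Measure Ω} {f h : Ω → ℝ}
    (hf : MemLp f 2 P) (hh : MemLp h 2 P) : Integrable (fun ω => f ω * h ω) P := by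
  have hpqr : (1 : ℝ≥0∞) / 1 = 1 / 2 + 1 / 2 := by
    rw [ENNReal.div_add_div_same, one_add_one_eq_two, ENNReal.div_self two_ne_zero ENNReal.ofNat_ne_top, div_one]
  have h1 : MemLp (h • f) 1 P := MemLp.smul (r := 1) (hpqr := ⟨by simpa [one_div] using hpqr.symm⟩) hf hh
  have h2 := memLp_one_iff_integrable.1 h1
  exact h2.congr (ae_of_all _ fun ω => mul_comm (h ω) (f ω))

/-- For `d ≥ 1`, `H ∈ (0,1)`, `A ∈ ℝ^(d×d)`, a `d`-dimensional fBM `B`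
with Hurst parameter `H`, and `i₀`, `C₁ ∈ (0,1)` with `min_{t ∈ [0,1]} a_{i₀i₀}(t) ≥ -1 + C₁`,
the `i₀`-th coordinate of the centered fOU process `X̃` satisfies
`E[(X̃_u^{i₀})²] ≥ C₁ u^(2H)` for every `u ∈ [0,1]`. -/
theorem fou_multidim_second_moment_lower {Ω : Type*} [MeasureSpace Ω]
    [IsProbabilityMeasure (ℙ : Measure Ω)] (d : ℕ) (hd : 1 ≤ d) (H : ℝ)
    (hH : H ∈ Ioo (0:ℝ) 1) (A : Matrix (Fin d) (Fin d) ℝ)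
    (B : ℝ → Ω → Fin d → ℝ) (hB : IsMultiFBM H B)
    (i₀ : Fin d) (C₁ : ℝ) (hC₁ : C₁ ∈ Ioo (0:ℝ) 1)
    (hdiag : ∀ t ∈ Icc (0:ℝ) 1, -1 + C₁ ≤ aEnt A t i₀ i₀) :
    ∀ u ∈ Icc (0:ℝ) 1,
      C₁ * u ^ (2 * H) ≤ ∫ ω, (fouCentered A B u ω i₀) ^ 2 ∂(ℙ : Measure Ω) := by
  intro u hu
  obtain ⟨hu0, hu1⟩ := hu
  have hH0 := hH.1
  have h2H : (0:ℝ) < 2 * H := by linarith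
  rcases hu0.eq_or_lt with h0 | hupos
  · rw [← h0, Real.zero_rpow (ne_of_gt h2H), mul_zero]
    exact integral_nonneg fun ω => sq_nonneg _
  obtain ⟨hBmeas, hBcont, -, hBcov⟩ := hB
  have huI : u ∈ Icc (0:ℝ) 1 := ⟨hu0, hu1⟩
  have huIoc : u ∈ Ioc (0:ℝ) 1 := ⟨hupos, hu1⟩
  -- clamping maps
  set π1 : ℝ → ℝ := fun s => max 0 (min s 1) with hπ1def
  set πu : ℝ → ℝ := fun s => max 0 (min s u) with hπudef
  have hπ1mem : ∀ s, π1 s ∈ Icc (0:ℝ) 1 :=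
    fun s => ⟨le_max_left _ _, max_le zero_le_one (min_le_right s 1)⟩
  have hπumem : ∀ s, πu s ∈ Icc (0:ℝ) u :=
    fun s => ⟨le_max_left _ _, max_le hu0 (min_le_right s u)⟩
  have hπ1cont : Continuous π1 := continuous_const.max (continuous_id.min continuous_const)
  have hπucont : Continuous πu := continuous_const.max (continuous_id.min continuous_const)
  have hπ1eq : ∀ s ∈ Icc (0:ℝ) 1, π1 s = s := by
    intro s hs; simp only [hπ1def, min_eq_left hs.2, max_eq_right hs.1]
  have hπueq : ∀ s ∈ Icc (0:ℝ) u, πu s = s := by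
    intro s hs; simp only [hπudef, min_eq_left hs.2, max_eq_right hs.1]
  -- clamped process and kernel
  set Bc : ℝ → Ω → Fin d → ℝ := fun s ω j => B (π1 s) ω j with hBcdef
  set g : Fin d → ℝ → ℝ := fun j s => aEnt A (u - πu s) i₀ j with hgdef
  have haEntCont : ∀ j, Continuous fun t => aEnt A t i₀ j := by
    intro j
    letI : SeminormedRing (Matrix (Fin d) (Fin d) ℝ) := Matrix.linftyOpSemiNormedRing
    letI : NormedRing (Matrix (Fin d) (Fin d) ℝ) := Matrix.linftyOpNormedRing
    letI : NormedAlgebra ℝ (Matrix (Fin d) (Fin d) ℝ) := Matrix.linftyOpNormedAlgebra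
    letI : NormedAlgebra ℚ (Matrix (Fin d) (Fin d) ℝ) := Matrix.linftyOpNormedAlgebra
    have h1 : Continuous fun t : ℝ => NormedSpace.exp (t • A) :=
      NormedSpace.exp_continuous.comp (continuous_id.smul continuous_const)
    have h2 : Continuous fun t : ℝ => NormedSpace.exp (t • A) * A := h1.mul continuous_const
    exact (continuous_apply j).comp ((continuous_apply i₀).comp h2)
  have hgcont : ∀ j, Continuous (g j) :=
    fun j => (haEntCont j).comp (continuous_const.sub hπucont)
  have hgval : ∀ j, ∀ s ∈ Icc (0:ℝ) u, g j s = aEnt A (u - s) i₀ j := by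
    intro j s hs; simp only [hgdef, hπueq s hs]
  -- uniform bound on the kernel
  obtain ⟨K, hK⟩ := (isCompact_Icc (a := (0:ℝ)) (b := u)).exists_bound_of_continuousOn
    (continuous_finset_sum Finset.univ fun j _ => (hgcont j).abs).continuousOn
  have hKj : ∀ j s, |g j s| ≤ K := by
    intro j s
    have h1 : g j s = g j (πu s) := by
      simp only [hgdef]; rw [hπueq (πu s) (hπumem s)]
    have h2 : |g j (πu s)| ≤ ∑ j', |g j' (πu s)| :=
      Finset.single_le_sum (f := fun j' => |g j' (πu s)|)
        (fun j' _ => abs_nonneg _) (Finset.mem_univ j)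
    have h3 := hK (πu s) (hπumem s)
    rw [Real.norm_eq_abs] at h3
    rw [h1]
    exact le_trans h2 (le_trans (le_abs_self _) h3)
  have hK0 : (0:ℝ) ≤ K := le_trans (abs_nonneg _) (hKj i₀ 0)
  -- clamped process facts
  have hBc_cont : ∀ ω j, Continuous fun s => Bc s ω j :=
    fun ω j => (hBcont ω j).comp_continuous hπ1cont hπ1mem
  have hBc_meas : ∀ s j, Measurable fun ω => Bc s ω j := fun s j => hBmeas _ (hπ1mem s) j
  have hBcu : ∀ j, Measurable (Function.uncurry fun s ω => Bc s ω j) :=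
    fun j => measurable_uncurry_of_continuous_of_measurable
      (fun ω => hBc_cont ω j) (fun s => hBc_meas s j)
  have hBceq : ∀ s ∈ Icc (0:ℝ) 1, ∀ ω j, Bc s ω j = B s ω j := by
    intro s hs ω j; simp only [hBcdef, hπ1eq s hs]
  -- integrability of squares from the covariance hypothesis
  have hIntSq : ∀ s ∈ Ioc (0:ℝ) 1, ∀ j, Integrable (fun ω => B s ω j ^ 2) ℙ := by
    intro s hs j
    by_contra hcon
    have h1 : ¬ Integrable (fun ω => B s ω j * B s ω j) ℙ := by
      simpa [← pow_two] using hcon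
    have h2 := hBcov j j s s ⟨hs.1.le, hs.2⟩ ⟨hs.1.le, hs.2⟩
    rw [integral_undef h1] at h2
    simp only [if_pos rfl, if_true, sub_self, abs_zero] at h2
    rw [Real.zero_rpow (ne_of_gt h2H)] at h2
    have hs2H : (0:ℝ) < s ^ (2 * H) := Real.rpow_pos_of_pos hs.1 _
    nlinarith [hs2H]
  have hL2 : ∀ s ∈ Ioc (0:ℝ) 1, ∀ j, MemLp (fun ω => B s ω j) 2 (ℙ : Measure Ω) :=
    fun s hs j => (memLp_two_iff_integrable_sq
      (hBmeas s ⟨hs.1.le, hs.2⟩ j).aestronglyMeasurable).2 (hIntSq s hs j)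
  have hmulI : ∀ s ∈ Ioc (0:ℝ) 1, ∀ j, Integrable (fun ω => B s ω j * B u ω i₀) ℙ :=
    fun s hs j => aux_integrable_mul (hL2 s hs j) (hL2 u huIoc i₀)
  -- the restricted measure
  set μs : Measure ℝ := volume.restrict (Ioc 0 u) with hμsdef
  haveI hμsfin : IsFiniteMeasure μs := by
    constructor
    rw [hμsdef, Measure.restrict_apply_univ, Real.volume_Ioc]
    exact ENNReal.ofReal_lt_top
  have hμsuniv : (μs Set.univ).toReal = u := by
    rw [hμsdef, Measure.restrict_apply_univ, Real.volume_Ioc, sub_zero,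
      ENNReal.toReal_ofReal hu0]
  set f₀ : ℝ → Ω → ℝ := fun s ω => ∑ j, g j s * Bc s ω j with hf₀def
  set I : Ω → ℝ := fun ω => ∫ s, f₀ s ω ∂μs with hIdef
  -- squares of the clamped process are integrable on the product space
  have hG2 : ∀ j, Integrable (fun p : ℝ × Ω => Bc p.1 p.2 j ^ 2) (μs.prod ℙ) := by
    intro j
    have hm : AEStronglyMeasurable (fun p : ℝ × Ω => Bc p.1 p.2 j ^ 2) (μs.prod ℙ) :=
      ((hBcu j).pow_const 2).aestronglyMeasurable
    rw [integrable_prod_iff hm]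
    constructor
    · filter_upwards [ae_restrict_mem measurableSet_Ioc] with s hs
      have hs1 : s ∈ Ioc (0:ℝ) 1 := ⟨hs.1, hs.2.trans hu1⟩
      have heq : (fun ω => Bc s ω j ^ 2) = fun ω => B s ω j ^ 2 := by
        funext ω; rw [hBceq s ⟨hs.1.le, hs1.2⟩ ω j]
      rw [heq]; exact hIntSq s hs1 j
    · have hcont : Integrable (fun s : ℝ => s ^ (2 * H)) μs :=
        (Real.continuous_rpow_const h2H.le).integrableOn_Ioc
      apply hcont.congr
      filter_upwards [ae_restrict_mem measurableSet_Ioc] with s hs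
      have hs1 : s ∈ Ioc (0:ℝ) 1 := ⟨hs.1, hs.2.trans hu1⟩
      have hval : ∫ ω, B s ω j * B s ω j ∂(ℙ : Measure Ω) = s ^ (2 * H) := by
        rw [hBcov j j s s ⟨hs1.1.le, hs1.2⟩ ⟨hs1.1.le, hs1.2⟩]
        simp only [if_pos rfl, if_true, sub_self, abs_zero]
        rw [Real.zero_rpow (ne_of_gt h2H)]; ring
      have heq : (fun ω => ‖Bc s ω j ^ 2‖) = fun ω => B s ω j * B s ω j := by
        funext ω
        rw [Real.norm_eq_abs, abs_of_nonneg (sq_nonneg _), hBceq s ⟨hs1.1.le, hs1.2⟩ ω j, sq]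
      rw [heq, hval]
  have hBu2prod : Integrable (fun p : ℝ × Ω => B u p.2 i₀ ^ 2) (μs.prod ℙ) := by
    have hm : AEStronglyMeasurable (fun p : ℝ × Ω => B u p.2 i₀ ^ 2) (μs.prod ℙ) :=
      (((hBmeas u huI i₀).comp measurable_snd).pow_const 2).aestronglyMeasurable
    rw [integrable_prod_iff hm]
    refine ⟨Filter.Eventually.of_forall fun s => hIntSq u huIoc i₀, ?_⟩
    exact integrable_const (∫ ω, ‖B u ω i₀ ^ 2‖ ∂(ℙ : Measure Ω))
  have hFmeas : Measurable (fun p : ℝ × Ω => (∑ j, g j p.1 * Bc p.1 p.2 j) * B u p.2 i₀) := by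
    apply Measurable.mul
    · exact Finset.measurable_sum Finset.univ fun j _ =>
        ((hgcont j).measurable.comp measurable_fst).mul (hBcu j)
    · exact (hBmeas u huI i₀).comp measurable_snd
  have hFint : Integrable
      (fun p : ℝ × Ω => (∑ j, g j p.1 * Bc p.1 p.2 j) * B u p.2 i₀) (μs.prod ℙ) := by
    have hdom : Integrable
        (fun p : ℝ × Ω => (K / 2) * ∑ j, (Bc p.1 p.2 j ^ 2 + B u p.2 i₀ ^ 2)) (μs.prod ℙ) :=
      (integrable_finset_sum Finset.univ fun j _ => (hG2 j).add hBu2prod).const_mul _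
    apply hdom.mono' hFmeas.aestronglyMeasurable
    refine Filter.Eventually.of_forall fun p => ?_
    rw [Real.norm_eq_abs, abs_mul]
    calc |∑ j, g j p.1 * Bc p.1 p.2 j| * |B u p.2 i₀|
        ≤ (∑ j, |g j p.1 * Bc p.1 p.2 j|) * |B u p.2 i₀| := by
          apply mul_le_mul_of_nonneg_right (Finset.abs_sum_le_sum_abs _ _) (abs_nonneg _)
      _ = ∑ j, |g j p.1| * |Bc p.1 p.2 j| * |B u p.2 i₀| := by
          rw [Finset.sum_mul]; congr 1; funext j; rw [abs_mul]
      _ ≤ ∑ j, (K / 2) * (Bc p.1 p.2 j ^ 2 + B u p.2 i₀ ^ 2) := by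
          apply Finset.sum_le_sum
          intro j _
          have h1 := hKj j p.1
          have h2 : |Bc p.1 p.2 j| * |B u p.2 i₀| ≤ (Bc p.1 p.2 j ^ 2 + B u p.2 i₀ ^ 2) / 2 := by
            nlinarith [sq_nonneg (|Bc p.1 p.2 j| - |B u p.2 i₀|), sq_abs (Bc p.1 p.2 j),
              sq_abs (B u p.2 i₀)]
          have h3 : (0:ℝ) ≤ |Bc p.1 p.2 j| * |B u p.2 i₀| :=
            mul_nonneg (abs_nonneg _) (abs_nonneg _)
          have h4 : (0:ℝ) ≤ Bc p.1 p.2 j ^ 2 + B u p.2 i₀ ^ 2 := by positivity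
          calc |g j p.1| * |Bc p.1 p.2 j| * |B u p.2 i₀|
              ≤ K * (|Bc p.1 p.2 j| * |B u p.2 i₀|) := by
                rw [mul_assoc]
                exact mul_le_mul_of_nonneg_right h1 h3
            _ ≤ K * ((Bc p.1 p.2 j ^ 2 + B u p.2 i₀ ^ 2) / 2) :=
                mul_le_mul_of_nonneg_left h2 hK0
            _ = (K / 2) * (Bc p.1 p.2 j ^ 2 + B u p.2 i₀ ^ 2) := by ring
      _ = (K / 2) * ∑ j, (Bc p.1 p.2 j ^ 2 + B u p.2 i₀ ^ 2) := by rw [Finset.mul_sum]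
  -- Fubini: value of E[I * B_u]
  have hswap := integral_integral_swap
    (f := fun s ω => (∑ j, g j s * Bc s ω j) * B u ω i₀) (μ := μs) (ν := ℙ) hFint
  have hIB_val : ∫ ω, I ω * B u ω i₀ ∂(ℙ : Measure Ω)
      = ∫ s, g i₀ s * ((s ^ (2 * H) + u ^ (2 * H) - (u - s) ^ (2 * H)) / 2) ∂μs := by
    have h1 : ∀ ω, I ω * B u ω i₀ = ∫ s, (∑ j, g j s * Bc s ω j) * B u ω i₀ ∂μs := by
      intro ω
      rw [hIdef]
      exact (integral_mul_const _ _).symm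
    calc ∫ ω, I ω * B u ω i₀ ∂(ℙ : Measure Ω)
        = ∫ ω, ∫ s, (∑ j, g j s * Bc s ω j) * B u ω i₀ ∂μs ∂(ℙ : Measure Ω) := by
          exact integral_congr_ae (Filter.Eventually.of_forall h1)
      _ = ∫ s, ∫ ω, (∑ j, g j s * Bc s ω j) * B u ω i₀ ∂(ℙ : Measure Ω) ∂μs := hswap.symm
      _ = ∫ s, g i₀ s * ((s ^ (2 * H) + u ^ (2 * H) - (u - s) ^ (2 * H)) / 2) ∂μs := by
          rw [hμsdef]
          apply setIntegral_congr_fun measurableSet_Ioc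
          intro s hs
          dsimp only
          have hs1 : s ∈ Ioc (0:ℝ) 1 := ⟨hs.1, hs.2.trans hu1⟩
          have hsI : s ∈ Icc (0:ℝ) 1 := ⟨hs1.1.le, hs1.2⟩
          have heq : (fun ω => (∑ j, g j s * Bc s ω j) * B u ω i₀)
              = fun ω => ∑ j, g j s * (B s ω j * B u ω i₀) := by
            funext ω
            rw [Finset.sum_mul]
            refine Finset.sum_congr rfl fun j _ => ?_
            rw [hBceq s hsI ω j]; ring
          rw [heq, integral_finset_sum Finset.univ fun j _ => (hmulI s hs1 j).const_mul _]
          have h2 : ∀ j : Fin d, ∫ ω, g j s * (B s ω j * B u ω i₀) ∂(ℙ : Measure Ω)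
              = g j s * (if j = i₀ then (s ^ (2 * H) + u ^ (2 * H) - |u - s| ^ (2 * H)) / 2
                else 0) := by
            intro j
            rw [integral_const_mul, hBcov j i₀ s u hsI huI]
          simp_rw [h2, mul_ite, mul_zero]
          rw [Finset.sum_ite_eq' Finset.univ i₀]
          simp only [Finset.mem_univ, if_true]
          rw [abs_of_nonneg (by linarith [hs.2] : (0:ℝ) ≤ u - s)]
  -- measurability of I
  have hImeas : StronglyMeasurable I := by
    have hf₀m : StronglyMeasurable (fun p : Ω × ℝ => ∑ j, g j p.2 * Bc p.2 p.1 j) := by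
      apply Measurable.stronglyMeasurable
      exact Finset.measurable_sum Finset.univ fun j _ =>
        ((hgcont j).measurable.comp measurable_snd).mul ((hBcu j).comp measurable_swap)
    exact hf₀m.integral_prod_right'
  -- Cauchy–Schwarz bound for I
  have hf₀L2 : ∀ ω, MemLp (fun s => f₀ s ω) 2 μs := by
    intro ω
    have hc : Continuous fun s => f₀ s ω :=
      continuous_finset_sum Finset.univ fun j _ => (hgcont j).mul (hBc_cont ω j)
    exact (memLp_two_iff_integrable_sq hc.aestronglyMeasurable).2 ((hc.pow 2).integrableOn_Ioc)
  have hCS : ∀ ω, I ω ^ 2 ≤ u * ∫ s, f₀ s ω ^ 2 ∂μs := by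
    intro ω
    have := aux_sq_integral_le μs (hf₀L2 ω)
    rwa [hμsuniv] at this
  have hptsq : ∀ ω, ∫ s, f₀ s ω ^ 2 ∂μs ≤ ∫ s, (d:ℝ) * ∑ j, K ^ 2 * Bc s ω j ^ 2 ∂μs := by
    intro ω
    have hcl : Continuous fun s => f₀ s ω ^ 2 :=
      (continuous_finset_sum Finset.univ fun j _ => (hgcont j).mul (hBc_cont ω j)).pow 2
    have hcr : Continuous fun s => (d:ℝ) * ∑ j, K ^ 2 * Bc s ω j ^ 2 :=
      continuous_const.mul (continuous_finset_sum Finset.univ fun j _ =>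
        continuous_const.mul ((hBc_cont ω j).pow 2))
    apply integral_mono hcl.integrableOn_Ioc hcr.integrableOn_Ioc
    intro s
    have h1 : f₀ s ω ^ 2 ≤ (d:ℝ) * ∑ j, (g j s * Bc s ω j) ^ 2 := by
      have hcs := sq_sum_le_card_mul_sum_sq (α := ℝ)
        (s := (Finset.univ : Finset (Fin d))) (f := fun j => g j s * Bc s ω j)
      simpa [Finset.card_univ] using hcs
    have h2 : ∑ j, (g j s * Bc s ω j) ^ 2 ≤ ∑ j, K ^ 2 * Bc s ω j ^ 2 := by
      apply Finset.sum_le_sum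
      intro j _
      rw [mul_pow]
      apply mul_le_mul_of_nonneg_right _ (sq_nonneg _)
      nlinarith [hKj j s, abs_nonneg (g j s), sq_abs (g j s)]
    calc f₀ s ω ^ 2 ≤ (d:ℝ) * ∑ j, (g j s * Bc s ω j) ^ 2 := h1
      _ ≤ (d:ℝ) * ∑ j, K ^ 2 * Bc s ω j ^ 2 :=
          mul_le_mul_of_nonneg_left h2 (Nat.cast_nonneg d)
  -- integrability of I², I·B_u, B_u²
  have hDint : Integrable
      (fun ω => u * ((d:ℝ) * ∑ j, K ^ 2 * ∫ s, Bc s ω j ^ 2 ∂μs)) (ℙ : Measure Ω) := by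
    have h1 : ∀ j : Fin d, Integrable (fun ω => ∫ s, Bc s ω j ^ 2 ∂μs) (ℙ : Measure Ω) :=
      fun j => (hG2 j).integral_prod_right
    exact (((integrable_finset_sum Finset.univ fun j _ =>
      (h1 j).const_mul (K ^ 2)).const_mul _).const_mul _)
  have hI2int : Integrable (fun ω => I ω ^ 2) (ℙ : Measure Ω) := by
    apply hDint.mono' (hImeas.measurable.pow_const 2).aestronglyMeasurable
    refine Filter.Eventually.of_forall fun ω => ?_
    rw [Real.norm_eq_abs, abs_of_nonneg (sq_nonneg _)]
    have h2 : ∫ s, (d:ℝ) * ∑ j, K ^ 2 * Bc s ω j ^ 2 ∂μs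
        = (d:ℝ) * ∑ j, K ^ 2 * ∫ s, Bc s ω j ^ 2 ∂μs := by
      rw [integral_const_mul]
      congr 1
      rw [integral_finset_sum (μ := μs) (f := fun j s => K ^ 2 * Bc s ω j ^ 2) Finset.univ fun j _ =>
        (((hBc_cont ω j).pow 2).integrableOn_Ioc).const_mul _]
      exact Finset.sum_congr rfl fun j _ => integral_const_mul _ _
    calc I ω ^ 2 ≤ u * ∫ s, f₀ s ω ^ 2 ∂μs := hCS ω
      _ ≤ u * ∫ s, (d:ℝ) * ∑ j, K ^ 2 * Bc s ω j ^ 2 ∂μs :=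
          mul_le_mul_of_nonneg_left (hptsq ω) hu0
      _ = u * ((d:ℝ) * ∑ j, K ^ 2 * ∫ s, Bc s ω j ^ 2 ∂μs) := by rw [h2]
  have hIBint : Integrable (fun ω => I ω * B u ω i₀) (ℙ : Measure Ω) := by
    have h1 := hFint.integral_prod_right
    apply h1.congr
    refine Filter.Eventually.of_forall fun ω => ?_
    show (∫ s, f₀ s ω * B u ω i₀ ∂μs) = I ω * B u ω i₀
    rw [hIdef]
    exact integral_mul_const _ _
  have hBu2int : Integrable (fun ω => B u ω i₀ ^ 2) (ℙ : Measure Ω) := hIntSq u huIoc i₀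
  have hBu2val : ∫ ω, B u ω i₀ ^ 2 ∂(ℙ : Measure Ω) = u ^ (2 * H) := by
    have h := hBcov i₀ i₀ u u huI huI
    simp only [if_pos rfl, if_true, sub_self, abs_zero] at h
    rw [Real.zero_rpow (ne_of_gt h2H)] at h
    have heq : (fun ω => B u ω i₀ ^ 2) = fun ω => B u ω i₀ * B u ω i₀ := by
      funext ω; rw [sq]
    rw [heq, h]; ring
  -- expansion of the second moment
  have heqf : ∀ ω, fouCentered A B u ω i₀ = I ω + B u ω i₀ := by
    intro ω
    show (∫ s in (0:ℝ)..u, ∑ j, aEnt A (u - s) i₀ j * B s ω j) + B u ω i₀ = I ω + B u ω i₀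
    congr 1
    rw [intervalIntegral.integral_of_le hu0, hIdef, hμsdef]
    apply setIntegral_congr_fun measurableSet_Ioc
    intro s hs
    dsimp only
    refine Finset.sum_congr rfl fun j _ => ?_
    rw [hgval j s ⟨hs.1.le, hs.2⟩, hBceq s ⟨hs.1.le, hs.2.trans hu1⟩ ω j]
  have hexp : ∫ ω, (fouCentered A B u ω i₀) ^ 2 ∂(ℙ : Measure Ω)
      = (∫ ω, I ω ^ 2 ∂(ℙ : Measure Ω))
        + (2 * ∫ ω, I ω * B u ω i₀ ∂(ℙ : Measure Ω)
          + ∫ ω, B u ω i₀ ^ 2 ∂(ℙ : Measure Ω)) := by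
    have hpt : ∀ ω, (fouCentered A B u ω i₀) ^ 2
        = I ω ^ 2 + (2 * (I ω * B u ω i₀) + B u ω i₀ ^ 2) := by
      intro ω; rw [heqf ω]; ring
    have hint2 : Integrable (fun ω => 2 * (I ω * B u ω i₀) + B u ω i₀ ^ 2) (ℙ : Measure Ω) :=
      (hIBint.const_mul 2).add hBu2int
    have hint3 : Integrable (fun ω => 2 * (I ω * B u ω i₀)) (ℙ : Measure Ω) :=
      hIBint.const_mul 2
    rw [integral_congr_ae (Filter.Eventually.of_forall hpt),
      integral_add hI2int hint2, integral_add hint3 hBu2int, integral_const_mul]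
  -- lower bound for the cross term
  have hcov_cont : Continuous fun s : ℝ => (s ^ (2 * H) + u ^ (2 * H) - (u - s) ^ (2 * H)) / 2 :=
    (((Real.continuous_rpow_const h2H.le).add continuous_const).sub
      ((Real.continuous_rpow_const h2H.le).comp (continuous_const.sub continuous_id))).div_const 2
  have hcov_nonneg : ∀ s ∈ Ioc (0:ℝ) u,
      0 ≤ (s ^ (2 * H) + u ^ (2 * H) - (u - s) ^ (2 * H)) / 2 := by
    intro s hs
    have h1 : (u - s) ^ (2 * H) ≤ u ^ (2 * H) :=
      Real.rpow_le_rpow (by linarith [hs.1, hs.2]) (by linarith [hs.1, hs.2]) h2H.le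
    have h2 : (0:ℝ) ≤ s ^ (2 * H) := Real.rpow_nonneg hs.1.le _
    linarith
  have hcovval : ∫ s, (s ^ (2 * H) + u ^ (2 * H) - (u - s) ^ (2 * H)) / 2 ∂μs
      = u ^ (2 * H) * u / 2 := by
    rw [hμsdef, ← intervalIntegral.integral_of_le hu0]
    have ha : ∫ s in (0:ℝ)..u, s ^ (2 * H) = (u ^ (2 * H + 1) - 0 ^ (2 * H + 1)) / (2 * H + 1) :=
      integral_rpow (Or.inl (by linarith))
    have hb : ∫ s in (0:ℝ)..u, (u - s) ^ (2 * H)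
        = (u ^ (2 * H + 1) - 0 ^ (2 * H + 1)) / (2 * H + 1) := by
      rw [intervalIntegral.integral_comp_sub_left (fun t => t ^ (2 * H)) u]
      simpa using integral_rpow (a := u - u) (b := u - 0) (Or.inl (by linarith))
    have hc : ∫ _s in (0:ℝ)..u, u ^ (2 * H) = u * u ^ (2 * H) := by
      rw [intervalIntegral.integral_const, smul_eq_mul, sub_zero]
    have hia : IntervalIntegrable (fun s : ℝ => s ^ (2 * H)) volume 0 u :=
      (Real.continuous_rpow_const h2H.le).intervalIntegrable 0 u
    have hib : IntervalIntegrable (fun s : ℝ => (u - s) ^ (2 * H)) volume 0 u :=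
      ((Real.continuous_rpow_const h2H.le).comp
        (continuous_const.sub continuous_id)).intervalIntegrable 0 u
    have hic : IntervalIntegrable (fun _s : ℝ => u ^ (2 * H)) volume 0 u :=
      intervalIntegrable_const
    rw [intervalIntegral.integral_div, intervalIntegral.integral_sub (hia.add hic) hib,
      intervalIntegral.integral_add hia hic, ha, hb, hc]
    ring
  have hSlb : (-1 + C₁) * (u ^ (2 * H) * u / 2)
      ≤ ∫ s, g i₀ s * ((s ^ (2 * H) + u ^ (2 * H) - (u - s) ^ (2 * H)) / 2) ∂μs := by
    have hmono : ∫ s in Ioc (0:ℝ) u,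
        (-1 + C₁) * ((s ^ (2 * H) + u ^ (2 * H) - (u - s) ^ (2 * H)) / 2)
        ≤ ∫ s in Ioc (0:ℝ) u,
        g i₀ s * ((s ^ (2 * H) + u ^ (2 * H) - (u - s) ^ (2 * H)) / 2) := by
      apply setIntegral_mono_on
      · exact (continuous_const.mul hcov_cont).integrableOn_Ioc
      · exact ((hgcont i₀).mul hcov_cont).integrableOn_Ioc
      · exact measurableSet_Ioc
      · intro s hs
        have hg1 : -1 + C₁ ≤ g i₀ s := by
          rw [hgval i₀ s ⟨hs.1.le, hs.2⟩]
          exact hdiag (u - s) ⟨by linarith [hs.2], by linarith [hs.1]⟩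
        exact mul_le_mul_of_nonneg_right hg1 (hcov_nonneg s hs)
    have hval : ∫ s in Ioc (0:ℝ) u,
        (-1 + C₁) * ((s ^ (2 * H) + u ^ (2 * H) - (u - s) ^ (2 * H)) / 2)
        = (-1 + C₁) * (u ^ (2 * H) * u / 2) := by
      rw [integral_const_mul]
      rw [show (volume.restrict (Ioc (0:ℝ) u)) = μs from hμsdef.symm, hcovval]
    calc (-1 + C₁) * (u ^ (2 * H) * u / 2)
        = ∫ s in Ioc (0:ℝ) u,
            (-1 + C₁) * ((s ^ (2 * H) + u ^ (2 * H) - (u - s) ^ (2 * H)) / 2) := hval.symm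
      _ ≤ _ := hmono
  -- put everything together
  have hI2nn : 0 ≤ ∫ ω, I ω ^ 2 ∂(ℙ : Measure Ω) := integral_nonneg fun ω => sq_nonneg _
  rw [hexp, hIB_val]
  have hu2H : (0:ℝ) < u ^ (2 * H) := Real.rpow_pos_of_pos hupos _
  nlinarith [hSlb, hI2nn, hu2H, hC₁.1, hC₁.2, hupos, hu1,
    mul_nonneg (mul_nonneg (sub_nonneg.2 hC₁.2.le) (sub_nonneg.2 hu1)) hu2H.le]
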